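/- Relational equivalences are closed under dependent products along contractible relations: given a type X, Y : X → Type a family of contractible types, A : X → Type, and B : (x : X) → Y x → A x → Type such that for all x and y the type Σ (a : A x), B x y a is contractible, the type Σ (a : ∀ x, A x), (∀ (x : X) (y : Y x), B x y (a x)) is contractible. -/
import Mathlib


/-- A type is contractible if it has a point to which every point is equal. -/
def IsContrT (X : Type u) : Prop := ∃ c : X, ∀ y : X, y = c

/-- Closure condition `contr_Π`: given a family `Y` of contractible types over
`X`, and families `A`, `B` such that `Σ (a : A x), B x y a` is contractible for
all `x`, `y`, the type `Σ (a : ∀ x, A x), ∀ x y, B x y (a x)` is contractible. -/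
theorem contr_pi {X : Type u} (Y : X → Type v) (hY : ∀ x, IsContrT (Y x))
    (A : X → Type w) (B : ∀ x : X, Y x → A x → Type z)
    (hB : ∀ (x : X) (y : Y x), IsContrT (Σ a : A x, B x y a)) :
    IsContrT (Σ a : ∀ x : X, A x, ∀ (x : X) (y : Y x), B x y (a x)) := by
  choose y0 hy0 using hY
  have key : ∀ x, IsContrT (Σ a : A x, ∀ y : Y x, B x y a) := by
    intro x
    obtain ⟨⟨a0, b0⟩, hc⟩ := hB x (y0 x)
    refine ⟨⟨a0, fun y => (hy0 x y) ▸ b0⟩, ?_⟩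
    rintro ⟨a, b⟩
    have h1 : (⟨a, b (y0 x)⟩ : Σ a : A x, B x (y0 x) a) = ⟨a0, b0⟩ := hc _
    have ha : a = a0 := congrArg Sigma.fst h1
    subst ha
    rw [Sigma.mk.inj_iff] at h1
    have hb : b (y0 x) = b0 := eq_of_heq h1.2
    subst hb
    refine congrArg (fun t => (⟨a, t⟩ : Σ a : A x, ∀ y : Y x, B x y a)) (funext fun y => ?_)
    have e := hy0 x y
    subst e
    rfl
  choose c hc using key
  refine ⟨⟨fun x => (c x).1, fun x y => (c x).2 y⟩, ?_⟩
  rintro ⟨a, b⟩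
  have h : (fun x => (⟨a x, fun y => b x y⟩ : Σ a : A x, ∀ y : Y x, B x y a)) = c :=
    funext fun x => hc x _
  subst h
  rfl
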